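/- Let μ be a partition, and for r ≥ 0 let Ũ_r(μ) be the set of partitions λ ⊇ μ with λ/μ a vertical strip of size r, and D̃_r(μ) the set of partitions ν ⊆ μ with μ/ν a vertical strip of size r. Then |Ũ_k(μ)| = ∑_{s=0}^{k} |D̃_{k−s}(μ)| for every k ≥ 0. -/

import Mathlib

open Finset

/-- rank: number of elements of `B` below `i`. -/
def rkf (B : Finset ℕ) (i : ℕ) : ℕ := (B.filter (· < i)).card
/-- corank: number of elements of `B` above `i`. -/
def crkf (B : Finset ℕ) (i : ℕ) : ℕ := (B.filter (i < ·)).card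

lemma rkf_add_crkf {B : Finset ℕ} {i : ℕ} (hi : i ∈ B) :
    rkf B i + crkf B i + 1 = B.card := by
  have h1 : (B.filter (· < i)).card + (B.filter (fun j => ¬ j < i)).card = B.card :=
    Finset.card_filter_add_card_filter_not _
  have h2 : B.filter (fun j => ¬ j < i) = insert i (B.filter (i < ·)) := by
    ext j
    simp only [mem_filter, mem_insert, not_lt]
    constructor
    · rintro ⟨hj, hij⟩
      rcases eq_or_lt_of_le hij with h | h
      · exact Or.inl h.symm
      · exact Or.inr ⟨hj, h⟩
    · rintro (rfl | ⟨hj, hij⟩)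
      · exact ⟨hi, le_rfl⟩
      · exact ⟨hj, hij.le⟩
  have h3 : i ∉ B.filter (i < ·) := by simp
  rw [h2, Finset.card_insert_of_notMem h3] at h1
  unfold rkf crkf; omega

lemma card_filter_rkf_lt (B : Finset ℕ) (t : ℕ) :
    (B.filter fun i => rkf B i < t).card = min t B.card := by
  suffices h : ∀ n (B : Finset ℕ) t, B.card = n → (B.filter fun i => rkf B i < t).card = min t B.card by
    exact h B.card B t rfl
  intro n
  induction n with
  | zero =>
    intro B t hn
    rw [Finset.card_eq_zero] at hn; subst hn; simp
  | succ n ih =>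
    intro B t hn
    have hne : B.Nonempty := by rw [← Finset.card_pos, hn]; omega
    set m := B.max' hne with hm
    have hmB : m ∈ B := B.max'_mem hne
    have hB' : (B.erase m).card = n := by rw [Finset.card_erase_of_mem hmB, hn]; omega
    have hrk_erase : ∀ i ∈ B.erase m, rkf (B.erase m) i = rkf B i := by
      intro i hi
      have him : i < m := by
        rcases Finset.mem_erase.mp hi with ⟨hne', hiB⟩
        exact lt_of_le_of_ne (B.le_max' i hiB) hne'
      unfold rkf
      rw [Finset.filter_erase, Finset.erase_eq_of_notMem]
      simp only [mem_filter, not_and, not_lt]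
      intro _; omega
    have hrkm : rkf B m = n := by
      unfold rkf
      have : B.filter (· < m) = B.erase m := by
        ext j
        simp only [mem_filter, Finset.mem_erase]
        constructor
        · rintro ⟨hj, hlt⟩; exact ⟨by omega, hj⟩
        · rintro ⟨hne', hj⟩; exact ⟨hj, lt_of_le_of_ne (B.le_max' j hj) hne'⟩
      rw [this, hB']
    have hfc : (B.erase m).filter (fun i => rkf B i < t)
        = (B.erase m).filter (fun i => rkf (B.erase m) i < t) := by
      apply Finset.filter_congr; intro i hi; rw [hrk_erase i hi]
    have hsplit : B.filter (fun i => rkf B i < t)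
        = if rkf B m < t then insert m ((B.erase m).filter fun i => rkf (B.erase m) i < t)
          else (B.erase m).filter fun i => rkf (B.erase m) i < t := by
      have h4 := Finset.filter_insert (fun i => rkf B i < t) m (B.erase m)
      rw [Finset.insert_erase hmB, hfc] at h4
      exact h4
    rw [hsplit]
    by_cases hc : rkf B m < t
    · rw [if_pos hc, Finset.card_insert_of_notMem (by simp), ih _ t hB']
      rw [hrkm] at hc; omega
    · rw [if_neg hc, ih _ t hB']
      rw [hrkm] at hc; omega

lemma card_filter_crkf_lt (B : Finset ℕ) (t : ℕ) :
    (B.filter fun i => crkf B i < t).card = min t B.card := by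
  have key : ∀ i ∈ B, (crkf B i < t ↔ ¬ rkf B i < B.card - t) := by
    intro i hi
    have := rkf_add_crkf hi
    omega
  have h1 : B.filter (fun i => crkf B i < t)
      = B.filter (fun i => ¬ rkf B i < B.card - t) := Finset.filter_congr key
  have h2 : (B.filter (fun i => rkf B i < B.card - t)).card
      + (B.filter (fun i => ¬ rkf B i < B.card - t)).card = B.card :=
    Finset.card_filter_add_card_filter_not _
  rw [card_filter_rkf_lt] at h2
  rw [h1]; omega

lemma mem_iff_rkf_lt_of_downclosed {B S : Finset ℕ} (hSB : S ⊆ B)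
    (hdc : ∀ i j, i ∈ B → j ∈ S → i < j → i ∈ S) {i : ℕ} (hi : i ∈ B) :
    i ∈ S ↔ rkf B i < S.card := by
  constructor
  · intro hiS
    have hsub : B.filter (· < i) ⊆ S.erase i := by
      intro j hj
      rcases Finset.mem_filter.mp hj with ⟨hjB, hji⟩
      exact Finset.mem_erase.mpr ⟨by omega, hdc j i hjB hiS hji⟩
    have := Finset.card_le_card hsub
    rw [Finset.card_erase_of_mem hiS] at this
    have hpos : 0 < S.card := Finset.card_pos.mpr ⟨i, hiS⟩
    unfold rkf; omega
  · intro hlt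
    by_contra hiS
    have hsub : S ⊆ B.filter (· < i) := by
      intro j hj
      refine Finset.mem_filter.mpr ⟨hSB hj, ?_⟩
      rcases lt_trichotomy j i with h | h | h
      · exact h
      · exact absurd (h ▸ hj) hiS
      · exact absurd (hdc i j hi hj h) hiS
    have := Finset.card_le_card hsub
    unfold rkf at hlt; omega

lemma mem_iff_crkf_lt_of_upclosed {B S : Finset ℕ} (hSB : S ⊆ B)
    (huc : ∀ i j, i ∈ B → j ∈ S → j < i → i ∈ S) {i : ℕ} (hi : i ∈ B) :
    i ∈ S ↔ crkf B i < S.card := by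
  constructor
  · intro hiS
    have hsub : B.filter (i < ·) ⊆ S.erase i := by
      intro j hj
      rcases Finset.mem_filter.mp hj with ⟨hjB, hji⟩
      exact Finset.mem_erase.mpr ⟨by omega, huc j i hjB hiS hji⟩
    have := Finset.card_le_card hsub
    rw [Finset.card_erase_of_mem hiS] at this
    have hpos : 0 < S.card := Finset.card_pos.mpr ⟨i, hiS⟩
    unfold crkf; omega
  · intro hlt
    by_contra hiS
    have hsub : S ⊆ B.filter (i < ·) := by
      intro j hj
      refine Finset.mem_filter.mpr ⟨hSB hj, ?_⟩
      rcases lt_trichotomy i j with h | h | h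
      · exact h
      · exact absurd (h ▸ hj) hiS
      · exact absurd (huc i j hi hj h) hiS
    have := Finset.card_le_card hsub
    unfold crkf at hlt; omega

lemma sum_sub_eq_card_filter (f g : ℕ → ℕ) (M : ℕ)
    (h : ∀ i, f i ≤ g i ∧ g i ≤ f i + 1) :
    ∑ i ∈ Finset.range M, (g i - f i) = ((Finset.range M).filter fun i => f i < g i).card := by
  rw [Finset.card_filter]
  apply Finset.sum_congr rfl
  intro i _
  rcases h i with ⟨h1, h2⟩
  by_cases hc : f i < g i
  · rw [if_pos hc]; omega
  · rw [if_neg hc]; omega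

abbrev Ucond (mu : ℕ → ℕ) (k : ℕ) (lam : ℕ → ℕ) : Prop :=
  Antitone lam ∧ (∀ i, mu i ≤ lam i ∧ lam i ≤ mu i + 1) ∧
    ∃ M, (∀ i, M ≤ i → lam i = mu i) ∧ ∑ i ∈ Finset.range M, (lam i - mu i) = k

abbrev Dcond (mu : ℕ → ℕ) (r : ℕ) (nu : ℕ → ℕ) : Prop :=
  Antitone nu ∧ (∀ i, nu i ≤ mu i ∧ mu i ≤ nu i + 1) ∧
    ∃ M, (∀ i, M ≤ i → nu i = mu i) ∧ ∑ i ∈ Finset.range M, (mu i - nu i) = r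

def blkf (mu : ℕ → ℕ) (M₀ v : ℕ) : Finset ℕ := (Finset.range M₀).filter fun j => mu j = v

def tvf (mu : ℕ → ℕ) (M₀ : ℕ) (lam : ℕ → ℕ) (v : ℕ) : ℕ :=
  ((blkf mu M₀ v).filter fun j => mu j < lam j).card

def fwdNu (mu : ℕ → ℕ) (M₀ : ℕ) (lam : ℕ → ℕ) : ℕ → ℕ := fun i =>
  mu i - (if 0 < mu i ∧ crkf (blkf mu M₀ (mu i)) i < tvf mu M₀ lam (mu i) then 1 else 0)

def fwdS (mu : ℕ → ℕ) (M₀ k : ℕ) (lam : ℕ → ℕ) : ℕ :=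
  (((Finset.range (M₀ + k)).filter fun i => mu i < lam i).filter fun i => mu i = 0).card

def zvf (mu : ℕ → ℕ) (M₀ : ℕ) (nu : ℕ → ℕ) (v : ℕ) : ℕ :=
  ((blkf mu M₀ v).filter fun j => nu j < mu j).card

def rkAll (mu : ℕ → ℕ) (i : ℕ) : ℕ := ((Finset.range i).filter fun j => mu j = mu i).card

def bwdLam (mu : ℕ → ℕ) (M₀ s : ℕ) (nu : ℕ → ℕ) : ℕ → ℕ := fun i =>
  mu i + (if rkAll mu i < (if mu i = 0 then s else zvf mu M₀ nu (mu i)) then 1 else 0)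

lemma filter_range_eq_filter_range {P : ℕ → Prop} [DecidablePred P] {a b : ℕ}
    (ha : ∀ i, P i → i < a) (hb : ∀ i, P i → i < b) :
    (Finset.range a).filter P = (Finset.range b).filter P := by
  ext i
  simp only [mem_filter, mem_range]
  exact ⟨fun ⟨_, h⟩ => ⟨hb i h, h⟩, fun ⟨_, h⟩ => ⟨ha i h, h⟩⟩

section Main

variable {mu : ℕ → ℕ} {M₀ k : ℕ}

lemma mu_pos_lt (hM₀ : ∀ i, M₀ ≤ i → mu i = 0) {i : ℕ} (h : 0 < mu i) : i < M₀ := by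
  by_contra h'
  rw [hM₀ i (by omega)] at h
  omega

lemma rkAll_eq_rkf_blk (hM₀ : ∀ i, M₀ ≤ i → mu i = 0) {i : ℕ} (h : 0 < mu i) :
    rkAll mu i = rkf (blkf mu M₀ (mu i)) i := by
  unfold rkAll rkf blkf
  rw [Finset.filter_filter]
  congr 1
  ext j
  simp only [mem_filter, mem_range]
  constructor
  · rintro ⟨hji, hv⟩
    exact ⟨mu_pos_lt hM₀ (by omega), hv, hji⟩
  · rintro ⟨_, hv, hji⟩
    exact ⟨hji, hv⟩

lemma rkAll_eq_rkf_zeroblk {N i : ℕ} (hi : i < N) (h0 : mu i = 0) :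
    rkAll mu i = rkf ((Finset.range N).filter fun j => mu j = 0) i := by
  unfold rkAll rkf
  rw [Finset.filter_filter]
  congr 1
  ext j
  simp only [mem_filter, mem_range, h0]
  constructor
  · rintro ⟨hji, hv⟩
    exact ⟨by omega, hv, hji⟩
  · rintro ⟨_, hv, hji⟩
    exact ⟨hji, hv⟩

/-- For `lam` satisfying the `U` condition, every added cell is in `range (M₀+k)`,
and there are exactly `k` added cells. -/
lemma U_ones (hmu : Antitone mu) (hM₀ : ∀ i, M₀ ≤ i → mu i = 0) {lam : ℕ → ℕ}
    (h : Ucond mu k lam) :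
    (∀ i, mu i < lam i → i < M₀ + k) ∧
      ((Finset.range (M₀ + k)).filter fun i => mu i < lam i).card = k := by
  obtain ⟨hA, hb, M, hM, hsum⟩ := h
  have hltM : ∀ i, mu i < lam i → i < M := by
    intro i hi
    by_contra h'
    rw [hM i (by omega)] at hi
    omega
  have hcardM : ((Finset.range M).filter fun i => mu i < lam i).card = k := by
    rw [← sum_sub_eq_card_filter mu lam M hb]
    exact hsum
  have hbound : ∀ i, mu i < lam i → i < M₀ + k := by
    intro i hi
    by_contra h'
    push_neg at h'
    have hsub : Finset.Ico M₀ (M₀ + k + 1) ⊆ (Finset.range M).filter fun i => mu i < lam i := by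
      intro j hj
      rcases Finset.mem_Ico.mp hj with ⟨hj1, hj2⟩
      have hmuj : mu j = 0 := hM₀ j hj1
      have hlamj : 0 < lam j := by
        have h1 : lam i ≤ lam j := hA (by omega)
        have h2 : mu i = 0 := hM₀ i (by omega)
        omega
      exact Finset.mem_filter.mpr ⟨Finset.mem_range.mpr (hltM j (by omega)), by omega⟩
    have := Finset.card_le_card hsub
    rw [hcardM, Nat.card_Ico] at this
    omega
  refine ⟨hbound, ?_⟩
  rw [filter_range_eq_filter_range hbound hltM]
  exact hcardM

lemma D_zeros (hM₀ : ∀ i, M₀ ≤ i → mu i = 0) {r : ℕ} {nu : ℕ → ℕ}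
    (h : Dcond mu r nu) :
    ((Finset.range M₀).filter fun i => nu i < mu i).card = r := by
  obtain ⟨hA, hb, M, hM, hsum⟩ := h
  have hltM : ∀ i, nu i < mu i → i < M := by
    intro i hi
    by_contra h'
    rw [hM i (by omega)] at hi
    omega
  have hltM₀ : ∀ i, nu i < mu i → i < M₀ := by
    intro i hi
    exact mu_pos_lt hM₀ (by omega)
  rw [filter_range_eq_filter_range hltM₀ hltM]
  rw [← sum_sub_eq_card_filter nu mu M (fun i => (hb i))]
  exact hsum


lemma zvf_le_card_blk (v : ℕ) (nu : ℕ → ℕ) : zvf mu M₀ nu v ≤ (blkf mu M₀ v).card :=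
  Finset.card_le_card (Finset.filter_subset _ _)

lemma tvf_le_card_blk (v : ℕ) (lam : ℕ → ℕ) : tvf mu M₀ lam v ≤ (blkf mu M₀ v).card :=
  Finset.card_le_card (Finset.filter_subset _ _)

lemma bwd_fiber_zero (hM₀ : ∀ i, M₀ ≤ i → mu i = 0) {s : ℕ} (hs : s ≤ k) (nu : ℕ → ℕ) :
    (((Finset.range (M₀ + k)).filter fun i => mu i < bwdLam mu M₀ s nu i).filter
      fun i => mu i = 0).card = s := by
  set B₀ := (Finset.range (M₀ + k)).filter (fun j => mu j = 0) with hB₀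
  have h1 : ((Finset.range (M₀ + k)).filter fun i => mu i < bwdLam mu M₀ s nu i).filter
      (fun i => mu i = 0) = B₀.filter (fun i => rkf B₀ i < s) := by
    ext i
    simp only [hB₀, Finset.mem_filter, Finset.mem_range]
    constructor
    · rintro ⟨⟨hiN, hlt⟩, h0⟩
      refine ⟨⟨hiN, h0⟩, ?_⟩
      rw [← rkAll_eq_rkf_zeroblk hiN h0]
      simp only [bwdLam, h0, eq_self_iff_true, if_true] at hlt
      by_contra hc
      rw [if_neg hc] at hlt
      omega
    · rintro ⟨⟨hiN, h0⟩, hrk⟩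
      rw [← rkAll_eq_rkf_zeroblk hiN h0] at hrk
      refine ⟨⟨hiN, ?_⟩, h0⟩
      simp only [bwdLam, h0, eq_self_iff_true, if_true, if_pos hrk]
      omega
  rw [h1, card_filter_rkf_lt]
  have hsub : Finset.Ico M₀ (M₀ + s) ⊆ B₀ := by
    intro j hj
    rcases Finset.mem_Ico.mp hj with ⟨hj1, hj2⟩
    exact Finset.mem_filter.mpr ⟨Finset.mem_range.mpr (by omega), hM₀ j hj1⟩
  have := Finset.card_le_card hsub
  rw [Nat.card_Ico] at this
  exact Nat.min_eq_left (by omega)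

lemma bwd_fiber_pos (hM₀ : ∀ i, M₀ ≤ i → mu i = 0) {s v : ℕ} (hv : v ≠ 0) (nu : ℕ → ℕ) :
    (((Finset.range (M₀ + k)).filter fun i => mu i < bwdLam mu M₀ s nu i).filter
      fun i => mu i = v).card = zvf mu M₀ nu v := by
  have h1 : ((Finset.range (M₀ + k)).filter fun i => mu i < bwdLam mu M₀ s nu i).filter
      (fun i => mu i = v) = (blkf mu M₀ v).filter (fun i => rkf (blkf mu M₀ v) i < zvf mu M₀ nu v) := by
    ext i
    simp only [Finset.mem_filter, Finset.mem_range]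
    simp only [Finset.mem_filter, Finset.mem_range, blkf]
    constructor
    · rintro ⟨⟨hiN, hlt⟩, h0⟩
      have hpos : 0 < mu i := by omega
      refine ⟨⟨mu_pos_lt hM₀ hpos, h0⟩, ?_⟩
      have hrw := rkAll_eq_rkf_blk (M₀ := M₀) hM₀ hpos
      rw [h0] at hrw
      simp only [blkf] at hrw
      rw [← hrw]
      simp only [bwdLam, h0, if_neg hv] at hlt
      by_contra hc
      rw [if_neg hc] at hlt
      omega
    · rintro ⟨⟨hiM, h0⟩, hrk⟩
      have hpos : 0 < mu i := by omega
      have hrw := rkAll_eq_rkf_blk (M₀ := M₀) hM₀ hpos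
      rw [h0] at hrw
      simp only [blkf] at hrw
      rw [← hrw] at hrk
      refine ⟨⟨by omega, ?_⟩, h0⟩
      simp only [bwdLam, h0, if_neg hv, if_pos hrk]
      omega
  rw [h1, card_filter_rkf_lt]
  exact Nat.min_eq_left (zvf_le_card_blk v nu)

lemma bwd_mem (hmu : Antitone mu) (hM₀ : ∀ i, M₀ ≤ i → mu i = 0) {s : ℕ} (hs : s ≤ k)
    {nu : ℕ → ℕ} (hD : Dcond mu (k - s) nu) : Ucond mu k (bwdLam mu M₀ s nu) := by
  obtain ⟨hAnu, hbnu, _⟩ := hD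
  have hbounds : ∀ i, mu i ≤ bwdLam mu M₀ s nu i ∧ bwdLam mu M₀ s nu i ≤ mu i + 1 := by
    intro i
    simp only [bwdLam]
    split_ifs <;> omega
  refine ⟨?_, hbounds, ?_⟩
  · -- antitone
    apply antitone_nat_of_succ_le
    intro i
    by_cases hlt : mu (i + 1) < mu i
    · have h1 := (hbounds (i + 1)).2
      have h2 := (hbounds i).1
      omega
    · have heq : mu (i + 1) = mu i := le_antisymm (hmu (by omega)) (by omega)
      have hr : rkAll mu i < rkAll mu (i + 1) := by
        unfold rkAll
        apply Finset.card_lt_card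
        rw [heq]
        constructor
        · intro j hj
          rcases Finset.mem_filter.mp hj with ⟨hj1, hj2⟩
          exact Finset.mem_filter.mpr ⟨Finset.mem_range.mpr (by
            have := Finset.mem_range.mp hj1; omega), hj2⟩
        · intro hsub
          have : i ∈ (Finset.range i).filter fun j => mu j = mu i :=
            hsub (Finset.mem_filter.mpr ⟨Finset.mem_range.mpr (by omega), rfl⟩)
          exact absurd (Finset.mem_filter.mp this).1 (by simp)
      simp only [bwdLam, heq]
      split_ifs with h1 h2 h2 <;> omega
  · -- existence of M and sum
    refine ⟨M₀ + k, ?_, ?_⟩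
    · intro i hi
      have h0 : mu i = 0 := hM₀ i (by omega)
      simp only [bwdLam, h0, eq_self_iff_true, if_true]
      have hge : s ≤ rkAll mu i := by
        unfold rkAll
        have hsub : Finset.Ico M₀ i ⊆ (Finset.range i).filter fun j => mu j = mu i := by
          intro j hj
          rcases Finset.mem_Ico.mp hj with ⟨hj1, hj2⟩
          rw [h0]
          exact Finset.mem_filter.mpr ⟨Finset.mem_range.mpr hj2, hM₀ j hj1⟩
        have := Finset.card_le_card hsub
        rw [Nat.card_Ico] at this
        omega
      rw [if_neg (by omega)]
    · rw [sum_sub_eq_card_filter mu _ _ hbounds]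
      set N := M₀ + k with hN
      set F := (Finset.range N).filter (fun i => mu i < bwdLam mu M₀ s nu i) with hF
      set t := (Finset.range N).image mu with ht
      have h1 : F.card = ∑ v ∈ t, (F.filter fun i => mu i = v).card := by
        apply Finset.card_eq_sum_card_fiberwise
        intro x hx
        exact Finset.mem_image.mpr ⟨x, Finset.mem_of_mem_filter x hx, rfl⟩
      set Z := (Finset.range M₀).filter (fun i => nu i < mu i) with hZ
      have hZcard : Z.card = k - s := D_zeros hM₀ ⟨hAnu, hbnu, ‹_›⟩
      have h2 : Z.card = ∑ v ∈ t, (Z.filter fun i => mu i = v).card := by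
        apply Finset.card_eq_sum_card_fiberwise
        intro x hx
        have : x < M₀ := Finset.mem_range.mp (Finset.mem_of_mem_filter x hx)
        exact Finset.mem_image.mpr ⟨x, Finset.mem_range.mpr (by omega), rfl⟩
      have hfib : ∀ v ∈ t, (F.filter fun i => mu i = v).card
          = (Z.filter fun i => mu i = v).card + (if v = 0 then s else 0) := by
        intro v _
        by_cases hv : v = 0
        · subst hv
          rw [if_pos rfl]
          have hZ0 : Z.filter (fun i => mu i = 0) = ∅ := by
            rw [Finset.filter_eq_empty_iff]
            intro i hi
            have := (Finset.mem_filter.mp hi).2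
            intro h0
            omega
          rw [hZ0]
          simp only [Finset.card_empty, zero_add]
          exact bwd_fiber_zero hM₀ hs nu
        · rw [if_neg hv]
          have hZv : Z.filter (fun i => mu i = v) = (blkf mu M₀ v).filter (fun j => nu j < mu j) := by
            ext i
            simp only [hZ, blkf, Finset.mem_filter, Finset.mem_range]
            tauto
          rw [hZv]
          rw [Nat.add_zero]
          exact bwd_fiber_pos hM₀ hv nu
      rw [h1, Finset.sum_congr rfl hfib, Finset.sum_add_distrib]
      rw [← h2, hZcard]
      rw [Finset.sum_ite_eq' t 0 (fun _ => s)]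
      by_cases hs0 : s = 0
      · subst hs0
        simp
      · have h0t : 0 ∈ t := by
          refine Finset.mem_image.mpr ⟨M₀, Finset.mem_range.mpr (by omega), hM₀ M₀ le_rfl⟩
        rw [if_pos h0t]
        omega

lemma fwd_bounds (lam : ℕ → ℕ) :
    ∀ i, fwdNu mu M₀ lam i ≤ mu i ∧ mu i ≤ fwdNu mu M₀ lam i + 1 := by
  intro i
  simp only [fwdNu]
  split_ifs with h
  · omega
  · omega

lemma fwd_lt_iff {lam : ℕ → ℕ} {i : ℕ} (h0 : mu i ≠ 0) :
    fwdNu mu M₀ lam i < mu i ↔ crkf (blkf mu M₀ (mu i)) i < tvf mu M₀ lam (mu i) := by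
  simp only [fwdNu]
  by_cases h : 0 < mu i ∧ crkf (blkf mu M₀ (mu i)) i < tvf mu M₀ lam (mu i)
  · rw [if_pos h]
    exact ⟨fun _ => h.2, fun _ => by omega⟩
  · rw [if_neg h]
    exact ⟨fun hcon => by omega, fun hc => absurd ⟨by omega, hc⟩ h⟩

lemma fwd_mem (hmu : Antitone mu) (hM₀ : ∀ i, M₀ ≤ i → mu i = 0) {lam : ℕ → ℕ}
    (hU : Ucond mu k lam) :
    fwdS mu M₀ k lam ≤ k ∧ Dcond mu (k - fwdS mu M₀ k lam) (fwdNu mu M₀ lam) := by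
  obtain ⟨hbound, hOcard⟩ := U_ones hmu hM₀ hU
  obtain ⟨hAlam, hblam, _⟩ := hU
  have hsle : fwdS mu M₀ k lam ≤ k := by
    unfold fwdS
    calc _ ≤ ((Finset.range (M₀ + k)).filter fun i => mu i < lam i).card :=
          Finset.card_le_card (Finset.filter_subset _ _)
      _ = k := hOcard
  refine ⟨hsle, ?_, fwd_bounds lam, ?_⟩
  · -- antitone
    apply antitone_nat_of_succ_le
    intro i
    have hb1 := fwd_bounds (mu := mu) (M₀ := M₀) lam i
    have hb2 := fwd_bounds (mu := mu) (M₀ := M₀) lam (i + 1)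
    by_cases hlt : mu (i + 1) < mu i
    · omega
    · have heq : mu (i + 1) = mu i := le_antisymm (hmu (by omega)) (by omega)
      by_cases h0 : mu i = 0
      · have e1 : fwdNu mu M₀ lam i = mu i := by
          simp only [fwdNu, h0]
          omega
        have e2 : fwdNu mu M₀ lam (i + 1) = mu (i + 1) := by
          simp only [fwdNu, heq, h0]
          omega
        omega
      · -- positive block: indicator is monotone along the block
        have hpos : 0 < mu i := by omega
        have hmem : i + 1 ∈ blkf mu M₀ (mu i) := by
          refine Finset.mem_filter.mpr ⟨Finset.mem_range.mpr ?_, heq⟩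
          exact mu_pos_lt hM₀ (by omega)
        have hcrk : crkf (blkf mu M₀ (mu i)) (i + 1) < crkf (blkf mu M₀ (mu i)) i := by
          unfold crkf
          apply Finset.card_lt_card
          constructor
          · intro j hj
            rcases Finset.mem_filter.mp hj with ⟨hj1, hj2⟩
            exact Finset.mem_filter.mpr ⟨hj1, by omega⟩
          · intro hsub
            have h1 : i + 1 ∈ (blkf mu M₀ (mu i)).filter (fun j => i < j) :=
              Finset.mem_filter.mpr ⟨hmem, by omega⟩
            have h2 := hsub h1
            have := (Finset.mem_filter.mp h2).2
            omega
        have key : fwdNu mu M₀ lam i < mu i → fwdNu mu M₀ lam (i + 1) < mu (i + 1) := by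
          intro h
          rw [fwd_lt_iff h0] at h
          rw [fwd_lt_iff (by omega : mu (i+1) ≠ 0)]
          rw [heq]
          omega
        omega
  · refine ⟨M₀, ?_, ?_⟩
    · intro i hi
      have h0 : mu i = 0 := hM₀ i hi
      simp only [fwdNu, h0]
      omega
    · rw [sum_sub_eq_card_filter (fwdNu mu M₀ lam) mu M₀ (fwd_bounds lam)]
      set N := M₀ + k with hN
      set O := (Finset.range N).filter (fun i => mu i < lam i) with hO
      set t := (Finset.range N).image mu with ht
      set Z := (Finset.range M₀).filter (fun i => fwdNu mu M₀ lam i < mu i) with hZ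
      have h1 : Z.card = ∑ v ∈ t, (Z.filter fun i => mu i = v).card := by
        apply Finset.card_eq_sum_card_fiberwise
        intro x hx
        have : x < M₀ := Finset.mem_range.mp (Finset.mem_of_mem_filter x hx)
        exact Finset.mem_image.mpr ⟨x, Finset.mem_range.mpr (by omega), rfl⟩
      have h2 : fwdS mu M₀ k lam + (O.filter fun i => ¬ mu i = 0).card = k := by
        have := Finset.card_filter_add_card_filter_not (s := O) (fun i => mu i = 0)
        rw [hOcard] at this
        exact this
      have h3 : (O.filter fun i => ¬ mu i = 0).card
          = ∑ v ∈ t, ((O.filter fun i => ¬ mu i = 0).filter fun i => mu i = v).card := by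
        apply Finset.card_eq_sum_card_fiberwise
        intro x hx
        exact Finset.mem_image.mpr ⟨x,
          Finset.mem_of_mem_filter x (Finset.mem_of_mem_filter x hx), rfl⟩
      have hfib : ∀ v ∈ t, (Z.filter fun i => mu i = v).card
          = ((O.filter fun i => ¬ mu i = 0).filter fun i => mu i = v).card := by
        intro v _
        by_cases hv : v = 0
        · subst hv
          have e1 : Z.filter (fun i => mu i = 0) = ∅ := by
            rw [Finset.filter_eq_empty_iff]
            intro i hi
            have h2' := (Finset.mem_filter.mp hi).2
            have hb := fwd_bounds (mu := mu) (M₀ := M₀) lam i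
            intro h0
            omega
          have e2 : (O.filter fun i => ¬ mu i = 0).filter (fun i => mu i = 0) = ∅ := by
            rw [Finset.filter_eq_empty_iff]
            intro i hi
            exact (Finset.mem_filter.mp hi).2
          rw [e1, e2]
        · have e1 : Z.filter (fun i => mu i = v)
              = (blkf mu M₀ v).filter (fun i => crkf (blkf mu M₀ v) i < tvf mu M₀ lam v) := by
            ext i
            simp only [Finset.mem_filter, Finset.mem_range]
            simp only [hZ, blkf, Finset.mem_filter, Finset.mem_range]
            constructor
            · rintro ⟨⟨hiM, hlt⟩, h0⟩
              refine ⟨⟨hiM, h0⟩, ?_⟩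
              rw [fwd_lt_iff (by omega : mu i ≠ 0)] at hlt
              rw [h0] at hlt
              simpa only [blkf] using hlt
            · rintro ⟨⟨hiM, h0⟩, hcrk⟩
              refine ⟨⟨hiM, ?_⟩, h0⟩
              rw [fwd_lt_iff (by omega : mu i ≠ 0), h0]
              simpa only [blkf] using hcrk
          have e2 : (O.filter fun i => ¬ mu i = 0).filter (fun i => mu i = v)
              = (blkf mu M₀ v).filter (fun j => mu j < lam j) := by
            ext i
            simp only [hO, blkf, Finset.mem_filter, Finset.mem_range]
            constructor
            · rintro ⟨⟨⟨hiN, hlt⟩, hne⟩, h0⟩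
              exact ⟨⟨mu_pos_lt hM₀ (by omega), h0⟩, hlt⟩
            · rintro ⟨⟨hiM, h0⟩, hlt⟩
              exact ⟨⟨⟨by omega, hlt⟩, by omega⟩, h0⟩
          rw [e1, e2]
          have : ((blkf mu M₀ v).filter
              (fun i => crkf (blkf mu M₀ v) i < tvf mu M₀ lam v)).card
              = min (tvf mu M₀ lam v) (blkf mu M₀ v).card := card_filter_crkf_lt _ _
          rw [this, Nat.min_eq_left (tvf_le_card_blk v lam)]
          rfl
      rw [h1, Finset.sum_congr rfl hfib, ← h3]
      omega

lemma zvf_of_fwdNu (lam : ℕ → ℕ) {v : ℕ} (hv : v ≠ 0) :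
    zvf mu M₀ (fwdNu mu M₀ lam) v = tvf mu M₀ lam v := by
  unfold zvf
  have e : (blkf mu M₀ v).filter (fun j => fwdNu mu M₀ lam j < mu j)
      = (blkf mu M₀ v).filter (fun j => crkf (blkf mu M₀ v) j < tvf mu M₀ lam v) := by
    apply Finset.filter_congr
    intro j hj
    have h0 : mu j = v := (Finset.mem_filter.mp hj).2
    rw [fwd_lt_iff (by omega : mu j ≠ 0), h0]
  rw [e, card_filter_crkf_lt, Nat.min_eq_left (tvf_le_card_blk v lam)]

lemma rt1 (hmu : Antitone mu) (hM₀ : ∀ i, M₀ ≤ i → mu i = 0) {lam : ℕ → ℕ}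
    (hU : Ucond mu k lam) :
    bwdLam mu M₀ (fwdS mu M₀ k lam) (fwdNu mu M₀ lam) = lam := by
  obtain ⟨hbound, hOcard⟩ := U_ones hmu hM₀ hU
  obtain ⟨hAlam, hblam, _⟩ := hU
  funext i
  by_cases h0 : mu i = 0
  · set B₀ := (Finset.range (M₀ + k)).filter (fun j => mu j = 0) with hB₀
    set S₀ := B₀.filter (fun j => 0 < lam j) with hS₀
    have hS₀card : S₀.card = fwdS mu M₀ k lam := by
      unfold fwdS
      congr 1
      ext j
      simp only [hS₀, hB₀, Finset.mem_filter, Finset.mem_range]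
      constructor
      · rintro ⟨⟨hjN, hj0⟩, hjl⟩
        exact ⟨⟨hjN, by omega⟩, hj0⟩
      · rintro ⟨⟨hjN, hjl⟩, hj0⟩
        exact ⟨⟨hjN, hj0⟩, by omega⟩
    have hdc : ∀ a b, a ∈ B₀ → b ∈ S₀ → a < b → a ∈ S₀ := by
      intro a b ha hb hab
      rcases Finset.mem_filter.mp hb with ⟨hbB, hbl⟩
      refine Finset.mem_filter.mpr ⟨ha, ?_⟩
      have := hAlam (le_of_lt hab)
      omega
    by_cases hiN : i < M₀ + k
    · have hiB : i ∈ B₀ := Finset.mem_filter.mpr ⟨Finset.mem_range.mpr hiN, h0⟩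
      have hiff := mem_iff_rkf_lt_of_downclosed (Finset.filter_subset _ _) hdc hiB
      rw [hS₀card] at hiff
      simp only [bwdLam, h0, eq_self_iff_true, if_true]
      rw [← rkAll_eq_rkf_zeroblk hiN h0] at hiff
      have hlb := (hblam i).2
      by_cases hli : 0 < lam i
      · have : i ∈ S₀ := Finset.mem_filter.mpr ⟨hiB, hli⟩
        rw [if_pos (hiff.mp this)]
        omega
      · have : rkAll mu i < fwdS mu M₀ k lam → False := by
          intro hc
          have := hiff.mpr hc
          exact hli (Finset.mem_filter.mp this).2
        rw [if_neg this]
        omega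
    · have hlami : lam i = mu i := by
        have h1 := (hblam i).1
        by_contra hc
        have : mu i < lam i := by omega
        exact hiN (hbound i this)
      have hge : fwdS mu M₀ k lam ≤ rkAll mu i := by
        rw [← hS₀card]
        have h1 : S₀ ⊆ B₀ := Finset.filter_subset _ _
        have h2 : B₀ ⊆ (Finset.range i).filter (fun j => mu j = mu i) := by
          intro j hj
          rcases Finset.mem_filter.mp hj with ⟨hjN, hj0⟩
          have := Finset.mem_range.mp hjN
          refine Finset.mem_filter.mpr ⟨Finset.mem_range.mpr (by omega), by omega⟩
        calc S₀.card ≤ B₀.card := Finset.card_le_card h1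
          _ ≤ _ := Finset.card_le_card h2
      simp only [bwdLam, h0, eq_self_iff_true, if_true]
      rw [if_neg (by omega)]
      omega
  · have hpos : 0 < mu i := by omega
    have hiM : i < M₀ := mu_pos_lt hM₀ hpos
    have hiB : i ∈ blkf mu M₀ (mu i) :=
      Finset.mem_filter.mpr ⟨Finset.mem_range.mpr hiM, rfl⟩
    set S := (blkf mu M₀ (mu i)).filter (fun j => mu j < lam j) with hS
    have hScard : S.card = tvf mu M₀ lam (mu i) := rfl
    have hdc : ∀ a b, a ∈ blkf mu M₀ (mu i) → b ∈ S → a < b → a ∈ S := by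
      intro a b ha hb hab
      rcases Finset.mem_filter.mp hb with ⟨hbB, hbl⟩
      refine Finset.mem_filter.mpr ⟨ha, ?_⟩
      have h1 : mu a = mu i := (Finset.mem_filter.mp ha).2
      have h2 : mu b = mu i := (Finset.mem_filter.mp hbB).2
      have := hAlam (le_of_lt hab)
      omega
    have hiff := mem_iff_rkf_lt_of_downclosed (Finset.filter_subset _ _) hdc hiB
    rw [hScard] at hiff
    simp only [bwdLam, if_neg h0]
    rw [zvf_of_fwdNu lam h0]
    rw [rkAll_eq_rkf_blk hM₀ hpos]
    have hlb := (hblam i).2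
    have hlb1 := (hblam i).1
    by_cases hli : mu i < lam i
    · have : i ∈ S := Finset.mem_filter.mpr ⟨hiB, hli⟩
      rw [if_pos (hiff.mp this)]
      omega
    · have : rkf (blkf mu M₀ (mu i)) i < tvf mu M₀ lam (mu i) → False := by
        intro hc
        exact hli (Finset.mem_filter.mp (hiff.mpr hc)).2
      rw [if_neg this]
      omega

lemma rt2a (hM₀ : ∀ i, M₀ ≤ i → mu i = 0) {s : ℕ} (hs : s ≤ k) (nu : ℕ → ℕ) :
    fwdS mu M₀ k (bwdLam mu M₀ s nu) = s :=
  bwd_fiber_zero hM₀ hs nu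

lemma rt2b (hM₀ : ∀ i, M₀ ≤ i → mu i = 0) {s : ℕ} {nu : ℕ → ℕ}
    (hAnu : Antitone nu) (hbnu : ∀ i, nu i ≤ mu i ∧ mu i ≤ nu i + 1) :
    fwdNu mu M₀ (bwdLam mu M₀ s nu) = nu := by
  funext i
  by_cases h0 : mu i = 0
  · have h1 := (hbnu i).1
    simp only [fwdNu, h0]
    omega
  · have hpos : 0 < mu i := by omega
    have hiM : i < M₀ := mu_pos_lt hM₀ hpos
    have hiB : i ∈ blkf mu M₀ (mu i) :=
      Finset.mem_filter.mpr ⟨Finset.mem_range.mpr hiM, rfl⟩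
    have htv : tvf mu M₀ (bwdLam mu M₀ s nu) (mu i) = zvf mu M₀ nu (mu i) := by
      unfold tvf
      have e : (blkf mu M₀ (mu i)).filter (fun j => mu j < bwdLam mu M₀ s nu j)
          = (blkf mu M₀ (mu i)).filter
            (fun j => rkf (blkf mu M₀ (mu i)) j < zvf mu M₀ nu (mu i)) := by
        apply Finset.filter_congr
        intro j hj
        have hj0 : mu j = mu i := (Finset.mem_filter.mp hj).2
        have hjpos : 0 < mu j := by omega
        have hrw := rkAll_eq_rkf_blk (M₀ := M₀) hM₀ hjpos
        rw [hj0] at hrw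
        simp only [bwdLam, hj0, if_neg h0, hrw]
        by_cases h : rkf (blkf mu M₀ (mu i)) j < zvf mu M₀ nu (mu i)
        · rw [if_pos h]
          exact ⟨fun _ => h, fun _ => by omega⟩
        · rw [if_neg h]
          exact ⟨fun hcon => by omega, fun hc => absurd hc h⟩
      rw [e, card_filter_rkf_lt, Nat.min_eq_left (zvf_le_card_blk (mu i) nu)]
    set S := (blkf mu M₀ (mu i)).filter (fun j => nu j < mu j) with hS
    have hScard : S.card = zvf mu M₀ nu (mu i) := rfl
    have huc : ∀ a b, a ∈ blkf mu M₀ (mu i) → b ∈ S → b < a → a ∈ S := by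
      intro a b ha hb hab
      rcases Finset.mem_filter.mp hb with ⟨hbB, hbl⟩
      refine Finset.mem_filter.mpr ⟨ha, ?_⟩
      have h1 : mu a = mu i := (Finset.mem_filter.mp ha).2
      have h2 : mu b = mu i := (Finset.mem_filter.mp hbB).2
      have := hAnu (le_of_lt hab)
      omega
    have hiff := mem_iff_crkf_lt_of_upclosed (Finset.filter_subset _ _) huc hiB
    rw [hScard] at hiff
    have h1 := (hbnu i).1
    have h2 := (hbnu i).2
    by_cases hni : nu i < mu i
    · have hmem : i ∈ S := Finset.mem_filter.mpr ⟨hiB, hni⟩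
      have hc := hiff.mp hmem
      simp only [fwdNu, htv, if_pos (⟨hpos, hc⟩ : 0 < mu i ∧ _)]
      omega
    · have hc : ¬ (0 < mu i ∧ crkf (blkf mu M₀ (mu i)) i < zvf mu M₀ nu (mu i)) := by
        rintro ⟨_, hcc⟩
        exact hni (Finset.mem_filter.mp (hiff.mpr hcc)).2
      simp only [fwdNu, htv, if_neg hc]
      omega

lemma D_finite (hM₀ : ∀ i, M₀ ≤ i → mu i = 0) (r : ℕ) :
    Finite {nu : ℕ → ℕ // Dcond mu r nu} := by
  apply Finite.of_injective (fun x : {nu : ℕ → ℕ // Dcond mu r nu} =>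
    (fun i : Fin M₀ => decide (x.1 i < mu i)))
  rintro ⟨nu1, h1⟩ ⟨nu2, h2⟩ heq
  apply Subtype.ext
  funext i
  show nu1 i = nu2 i
  by_cases hi : i < M₀
  · have hcc : nu1 i < mu i ↔ nu2 i < mu i := by
      have hcc0 := congrFun heq ⟨i, hi⟩
      simpa only [decide_eq_decide] using hcc0
    have hb1 := h1.2.1 i
    have hb2 := h2.2.1 i
    omega
  · have h0 : mu i = 0 := hM₀ i (by omega)
    have hb1 := (h1.2.1 i).1
    have hb2 := (h2.2.1 i).1
    omega

lemma main_aux (hmu : Antitone mu) (hM₀ : ∀ i, M₀ ≤ i → mu i = 0) (k : ℕ) :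
    Nat.card {lam : ℕ → ℕ // Ucond mu k lam}
      = ∑ s ∈ Finset.range (k + 1), Nat.card {nu : ℕ → ℕ // Dcond mu (k - s) nu} := by
  have hfin : ∀ s : ℕ, Finite {nu : ℕ → ℕ // Dcond mu (k - s) nu} :=
    fun s => D_finite hM₀ (k - s)
  let f : (Σ s : Fin (k + 1), {nu : ℕ → ℕ // Dcond mu (k - (s : ℕ)) nu})
      → {lam : ℕ → ℕ // Ucond mu k lam} :=
    fun x => ⟨bwdLam mu M₀ (x.1 : ℕ) x.2.1,
      bwd_mem hmu hM₀ (Nat.lt_succ_iff.mp x.1.isLt) x.2.2⟩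
  have hbij : Function.Bijective f := by
    constructor
    · rintro ⟨⟨s1, hs1⟩, ⟨nu1, h1⟩⟩ ⟨⟨s2, hs2⟩, ⟨nu2, h2⟩⟩ heq
      simp only [f, Subtype.mk.injEq] at heq
      have hle1 : s1 ≤ k := Nat.lt_succ_iff.mp hs1
      have hle2 : s2 ≤ k := Nat.lt_succ_iff.mp hs2
      have e1 : s1 = s2 := by
        rw [← rt2a hM₀ hle1 nu1, ← rt2a hM₀ hle2 nu2, heq]
      subst e1
      have e2 : nu1 = nu2 := by
        rw [← rt2b hM₀ h1.1 h1.2.1, ← rt2b hM₀ h2.1 h2.2.1, heq]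
      subst e2
      rfl
    · rintro ⟨lam, hU⟩
      obtain ⟨hsle, hD⟩ := fwd_mem hmu hM₀ hU
      exact ⟨⟨⟨fwdS mu M₀ k lam, Nat.lt_succ_of_le hsle⟩, ⟨fwdNu mu M₀ lam, hD⟩⟩,
        Subtype.ext (rt1 hmu hM₀ hU)⟩
  rw [← Nat.card_congr (Equiv.ofBijective f hbij)]
  haveI : ∀ s : Fin (k + 1), Fintype {nu : ℕ → ℕ // Dcond mu (k - (s : ℕ)) nu} :=
    fun s => @Fintype.ofFinite _ (hfin s)
  rw [Nat.card_eq_fintype_card, Fintype.card_sigma]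
  rw [← Fin.sum_univ_eq_sum_range (fun s => Nat.card {nu : ℕ → ℕ // Dcond mu (k - s) nu}) (k + 1)]
  exact Finset.sum_congr rfl fun s _ => (Nat.card_eq_fintype_card).symm

end Main

/-- Let `μ` be a partition (a weakly decreasing, eventually zero sequence).  For `r ≥ 0`
let `Ũ_r(μ)` be the set of partitions `λ ⊇ μ` with `λ/μ` a vertical strip of size `r`
(`λ_i - μ_i ∈ {0,1}` for all `i`, `|λ| - |μ| = r`), and `D̃_r(μ)` the set of partitions
`ν ⊆ μ` with `μ/ν` a vertical strip of size `r`.  Then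
`|Ũ_k(μ)| = ∑_{s=0}^k |D̃_{k-s}(μ)|` for every `k ≥ 0`. -/
theorem vertical_strip_count (mu : ℕ → ℕ) (hmu : Antitone mu)
    (hfin : ∃ M, ∀ i, M ≤ i → mu i = 0) (k : ℕ) :
    Nat.card {lam : ℕ → ℕ // Antitone lam ∧
        (∀ i, mu i ≤ lam i ∧ lam i ≤ mu i + 1) ∧
        ∃ M, (∀ i, M ≤ i → lam i = mu i) ∧
          ∑ i ∈ Finset.range M, (lam i - mu i) = k} =
      ∑ s ∈ Finset.range (k + 1),
        Nat.card {nu : ℕ → ℕ // Antitone nu ∧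
          (∀ i, nu i ≤ mu i ∧ mu i ≤ nu i + 1) ∧
          ∃ M, (∀ i, M ≤ i → nu i = mu i) ∧
            ∑ i ∈ Finset.range M, (mu i - nu i) = k - s} := by
  obtain ⟨M₀, hM₀⟩ := hfin
  exact main_aux hmu hM₀ k
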